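/- Let G be a group, H a subgroup of G, and N a nilpotent normal subgroup of G. If H · [N,N] = G (i.e., every element of G is a product of an element of H and an element of the commutator subgroup of N), then H = G. -/

import Mathlib

open scoped commutatorElement

private lemma comm_mul_left' {K : Type*} [Group K] (a b c : K) :
    ⁅a * b, c⁆ = (a * ⁅b, c⁆ * a⁻¹) * ⁅a, c⁆ := by group

private lemma comm_mul_right' {K : Type*} [Group K] (a b c : K) :
    ⁅a, b * c⁆ = ⁅a, b⁆ * (b * ⁅a, c⁆ * b⁻¹) := by group

/-- In a nilpotent group, a subgroup that together with the commutator subgroup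
generates (in the strong sense of sup) the whole group is the whole group. -/
private lemma aux_nilpotent_sup_commutator {K : Type*} [Group K]
    (hnil : Group.IsNilpotent K) (M : Subgroup K)
    (h : M ⊔ ⁅(⊤ : Subgroup K), ⊤⁆ = ⊤) : M = ⊤ := by
  have key : ∀ k, 1 ≤ k → M ⊔ (⊤ : Subgroup K).lowerCentralSeries k = ⊤ := by
    intro k hk
    induction k with
    | zero => omega
    | succ n ih =>
      rcases Nat.eq_zero_or_pos n with hn0 | hn1
      · subst hn0
        rw [lowerCentralSeries_one, commutator_def] at *
        exact h
      · have hn := ih hn1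
        have step : ⁅(⊤ : Subgroup K), ⊤⁆ ≤ M ⊔ (⊤ : Subgroup K).lowerCentralSeries (n + 1) := by
          rw [Subgroup.commutator_le]
          intro a _ b _
          have ha : a ∈ (↑(M ⊔ (⊤ : Subgroup K).lowerCentralSeries n) : Set K) := by
            rw [hn]; trivial
          have hb : b ∈ (↑(M ⊔ (⊤ : Subgroup K).lowerCentralSeries n) : Set K) := by
            rw [hn]; trivial
          rw [Subgroup.mul_normal] at ha hb
          obtain ⟨m, hm, z, hz, rfl⟩ := ha
          obtain ⟨m', hm', z', hz', rfl⟩ := hb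
          have hsucc : ∀ x ∈ (⊤ : Subgroup K).lowerCentralSeries n, ∀ y : K,
              ⁅x, y⁆ ∈ (⊤ : Subgroup K).lowerCentralSeries (n + 1) := fun x hx y =>
            Subgroup.commutator_mem_commutator hx (Subgroup.mem_top y)
          have hγ : ∀ w ∈ (⊤ : Subgroup K).lowerCentralSeries (n + 1),
              w ∈ M ⊔ (⊤ : Subgroup K).lowerCentralSeries (n + 1) := fun w hw =>
            (le_sup_right : (⊤ : Subgroup K).lowerCentralSeries (n+1) ≤ _) hw
          have hM : ∀ w ∈ M, w ∈ M ⊔ (⊤ : Subgroup K).lowerCentralSeries (n + 1) := fun w hw =>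
            (le_sup_left : M ≤ _) hw
          have hm₀ : m ∈ M := hm
          have hm'₀ : m' ∈ M := hm'
          have hz₀ : z ∈ (⊤ : Subgroup K).lowerCentralSeries n := hz
          have hz'₀ : z' ∈ (⊤ : Subgroup K).lowerCentralSeries n := hz'
          have c1 := hsucc z hz₀ m'
          have c2 := hsucc z hz₀ z'
          have c3 : ⁅m, z'⁆ ∈ (⊤ : Subgroup K).lowerCentralSeries (n + 1) := by
            rw [← commutatorElement_inv]
            exact inv_mem (hsucc z' hz'₀ m)
          have hmS : m ∈ M ⊔ (⊤ : Subgroup K).lowerCentralSeries (n + 1) := hM _ hm₀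
          have hm'S : m' ∈ M ⊔ (⊤ : Subgroup K).lowerCentralSeries (n + 1) := hM _ hm'₀
          have s1 : ⁅z, m'⁆ ∈ M ⊔ (⊤ : Subgroup K).lowerCentralSeries (n + 1) := hγ _ c1
          have s2 : ⁅z, z'⁆ ∈ M ⊔ (⊤ : Subgroup K).lowerCentralSeries (n + 1) := hγ _ c2
          have s3 : ⁅m, z'⁆ ∈ M ⊔ (⊤ : Subgroup K).lowerCentralSeries (n + 1) := hγ _ c3
          have s4 : ⁅m, m'⁆ ∈ M ⊔ (⊤ : Subgroup K).lowerCentralSeries (n + 1) :=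
            hM _ (mul_mem (mul_mem (mul_mem hm₀ hm'₀) (inv_mem hm₀)) (inv_mem hm'₀))
          simp only [comm_mul_left', comm_mul_right']
          exact mul_mem (mul_mem (mul_mem (mul_mem hmS s1) (inv_mem hmS)) s4)
            (mul_mem (mul_mem hm'S
              (mul_mem (mul_mem (mul_mem hmS s2) (inv_mem hmS)) s3)) (inv_mem hm'S))
        have hle : (⊤ : Subgroup K).lowerCentralSeries n ≤ M ⊔ (⊤ : Subgroup K).lowerCentralSeries (n + 1) := by
          calc (⊤ : Subgroup K).lowerCentralSeries n ≤ (⊤ : Subgroup K).lowerCentralSeries 1 :=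
                lowerCentralSeries_antitone ⊤ hn1
            _ = ⁅(⊤ : Subgroup K), ⊤⁆ := lowerCentralSeries_one
            _ ≤ _ := step
        rw [eq_top_iff]
        nth_rewrite 1 [← hn]
        exact sup_le le_sup_left hle
  obtain ⟨n, hn⟩ := nilpotent_iff_lowerCentralSeries.mp hnil
  have hb : (⊤ : Subgroup K).lowerCentralSeries (n + 1) = ⊥ :=
    le_bot_iff.mp (hn ▸ lowerCentralSeries_antitone ⊤ (Nat.le_succ n))
  have := key (n + 1) (by omega)
  rwa [hb, sup_bot_eq] at this

/-- Kovacic's lemma: if `H` is a subgroup of `G`, `N` a nilpotent normal subgroup,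
and every element of `G` is a product of an element of `H` and an element of the
commutator subgroup `⁅N, N⁆`, then `H = G`. -/
theorem stmt0 {G : Type*} [Group G] (H N : Subgroup G) (hN : N.Normal)
    (hnil : Group.IsNilpotent N)
    (hgen : ∀ g : G, ∃ h ∈ H, ∃ n ∈ ⁅N, N⁆, g = h * n) :
    H = ⊤ := by
  have hcomm_le_N : ⁅N, N⁆ ≤ N :=
    Subgroup.commutator_le.mpr fun a ha b hb =>
      mul_mem (mul_mem (mul_mem ha hb) (inv_mem ha)) (inv_mem hb)
  have hmap : ⁅N, N⁆ = Subgroup.map N.subtype ⁅(⊤ : Subgroup ↥N), ⊤⁆ := by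
    rw [Subgroup.map_commutator]
    congr 1 <;>
      rw [← MonoidHom.range_eq_map, Subgroup.range_subtype]
  have hNH : N ≤ H := by
    set M := (H ⊓ N).subgroupOf N with hM
    have htop : M ⊔ ⁅(⊤ : Subgroup ↥N), ⊤⁆ = ⊤ := by
      rw [eq_top_iff]
      rintro x -
      obtain ⟨h, hh, n, hn, hx⟩ := hgen (x : G)
      have hnN : n ∈ N := hcomm_le_N hn
      have hhN : h ∈ N := by
        have : h = (x : G) * n⁻¹ := by rw [hx]; group
        rw [this]
        exact mul_mem x.2 (inv_mem hnN)
      have h1 : (⟨h, hhN⟩ : ↥N) ∈ M := by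
        rw [hM, Subgroup.mem_subgroupOf]
        exact ⟨hh, hhN⟩
      have hn' : N.subtype ⟨n, hnN⟩ ∈ Subgroup.map N.subtype ⁅(⊤ : Subgroup ↥N), ⊤⁆ := by
        rw [← hmap]; exact hn
      have h2 : (⟨n, hnN⟩ : ↥N) ∈ ⁅(⊤ : Subgroup ↥N), ⊤⁆ :=
        (Subgroup.mem_map_iff_mem N.subtype_injective).mp hn'
      have hxeq : x = (⟨h, hhN⟩ : ↥N) * ⟨n, hnN⟩ := Subtype.ext hx
      rw [hxeq]
      exact mul_mem ((le_sup_left : M ≤ M ⊔ ⁅(⊤ : Subgroup ↥N), ⊤⁆) h1)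
        ((le_sup_right : ⁅(⊤ : Subgroup ↥N), ⊤⁆ ≤ M ⊔ ⁅(⊤ : Subgroup ↥N), ⊤⁆) h2)
    have := aux_nilpotent_sup_commutator hnil M htop
    rw [hM, Subgroup.subgroupOf_eq_top] at this
    exact le_trans this inf_le_left
  rw [eq_top_iff]
  rintro g -
  obtain ⟨h, hh, n, hn, rfl⟩ := hgen g
  exact mul_mem hh (hNH (hcomm_le_N hn))
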